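/- Let q ≡ 3 (mod 4) be a prime power with q ≥ 7, and let X_q be the orbital digraph of H = SL(2,q) on Δ with arc set {([1,0],[0,1])^h : h ∈ H}. Then in X_q, for every vertex v there is exactly one vertex not adjacent to v (in either direction), namely v^z, where z = -I is the central involution of SL(2,q). -/

import Mathlib

namespace XqAux

variable {F : Type*} [Field F] [Fintype F] [DecidableEq F]

/-- The orbit of `v` under nonzero square scalars. -/
def Oo (v : Fin 2 → F) : Set (Fin 2 → F) := {w | ∃ x : F, x ≠ 0 ∧ x ^ 2 • v = w}

lemma ringChar_ne_two (hq : Fintype.card F % 4 = 3) : ringChar F ≠ 2 := by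
  intro h
  have h2 := FiniteField.even_card_of_char_two h
  omega

lemma neg_one_not_square (hq : Fintype.card F % 4 = 3) : ¬ IsSquare (-1 : F) := by
  rw [FiniteField.isSquare_neg_one_iff, hq]
  simp

lemma square_dichotomy (hq : Fintype.card F % 4 = 3) {d : F} (hd : d ≠ 0) :
    IsSquare d ∨ IsSquare (-d) := by
  have hch := ringChar_ne_two (F := F) hq
  by_contra h
  push_neg at h
  obtain ⟨h1, h2⟩ := h
  rcases FiniteField.pow_dichotomy hch hd with h3 | h3
  · exact h1 ((FiniteField.isSquare_iff hch hd).mpr h3)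
  · have hnd : (-d : F) ≠ 0 := neg_ne_zero.mpr hd
    apply h2
    rw [FiniteField.isSquare_iff hch hnd]
    have hm1 : ((-1 : F)) ^ (Fintype.card F / 2) = -1 := by
      rcases FiniteField.pow_dichotomy hch (a := (-1 : F)) (by simp) with h4 | h4
      · exfalso
        exact neg_one_not_square hq ((FiniteField.isSquare_iff hch (by simp)).mpr h4)
      · exact h4
    calc (-d : F) ^ (Fintype.card F / 2) = (-1) ^ (Fintype.card F / 2) * d ^ (Fintype.card F / 2) := by
          rw [← mul_pow]; ring_nf
      _ = (-1) * (-1) := by rw [hm1, h3]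
      _ = 1 := by ring

lemma exists_sq_of_isSquare {d : F} (hd : d ≠ 0) (h : IsSquare d) :
    ∃ e : F, e ≠ 0 ∧ e ^ 2 = d := by
  obtain ⟨r, rfl⟩ := h
  exact ⟨r, fun h0 => hd (by rw [h0]; ring), by ring⟩

lemma O_smul {v : Fin 2 → F} {x : F} (hx : x ≠ 0) : Oo (x ^ 2 • v) = Oo v := by
  ext w
  constructor
  · rintro ⟨y, hy, rfl⟩
    refine ⟨y * x, mul_ne_zero hy hx, ?_⟩
    rw [smul_smul]
    congr 1
    ring
  · rintro ⟨y, hy, rfl⟩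
    refine ⟨y * x⁻¹, mul_ne_zero hy (inv_ne_zero hx), ?_⟩
    rw [smul_smul]
    congr 1
    field_simp

lemma O_eq_of_smul {u v : Fin 2 → F} {x : F} (hx : x ≠ 0) (h : x ^ 2 • u = v) :
    Oo u = Oo v := by
  rw [← h, O_smul hx]

lemma exists_of_O_eq {u v : Fin 2 → F} (h : Oo u = Oo v) :
    ∃ x : F, x ≠ 0 ∧ x ^ 2 • u = v := by
  have : v ∈ Oo v := ⟨1, one_ne_zero, by simp⟩
  rw [← h] at this
  exact this

lemma act_O (g : Matrix.SpecialLinearGroup (Fin 2) F) (v : Fin 2 → F) :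
    (fun w => Matrix.vecMul w (g : Matrix (Fin 2) (Fin 2) F)) '' Oo v
      = Oo (Matrix.vecMul v (g : Matrix (Fin 2) (Fin 2) F)) := by
  ext w
  simp only [Set.mem_image]
  constructor
  · rintro ⟨_, ⟨x, hx, rfl⟩, rfl⟩
    exact ⟨x, hx, by rw [Matrix.smul_vecMul]⟩
  · rintro ⟨x, hx, rfl⟩
    exact ⟨x ^ 2 • v, ⟨x, hx, rfl⟩, by rw [Matrix.smul_vecMul]⟩

lemma vecMul_e0 (M : Matrix (Fin 2) (Fin 2) F) :
    Matrix.vecMul ![1, 0] M = M 0 := by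
  ext j
  simp [Matrix.vecMul, dotProduct, Fin.sum_univ_two]

lemma vecMul_e1 (M : Matrix (Fin 2) (Fin 2) F) :
    Matrix.vecMul ![0, 1] M = M 1 := by
  ext j
  simp [Matrix.vecMul, dotProduct, Fin.sum_univ_two]

/-- Characterization of arcs: `Arc (Oo u) (Oo v)` iff `det ![u; v]` is a nonzero square. -/
lemma arc_iff {u v : Fin 2 → F} :
    (∃ h : Matrix.SpecialLinearGroup (Fin 2) F,
        (fun w => Matrix.vecMul w (h : Matrix (Fin 2) (Fin 2) F)) '' Oo ![1, 0] = Oo u ∧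
        (fun w => Matrix.vecMul w (h : Matrix (Fin 2) (Fin 2) F)) '' Oo ![0, 1] = Oo v) ↔
      ∃ e : F, e ≠ 0 ∧ e ^ 2 = u 0 * v 1 - u 1 * v 0 := by
  constructor
  · rintro ⟨h, h0, h1⟩
    rw [act_O, vecMul_e0] at h0
    rw [act_O, vecMul_e1] at h1
    obtain ⟨a, ha, ha2⟩ := exists_of_O_eq h0
    obtain ⟨b, hb, hb2⟩ := exists_of_O_eq h1
    have hdet : (h : Matrix (Fin 2) (Fin 2) F) 0 0 * (h : Matrix (Fin 2) (Fin 2) F) 1 1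
        - (h : Matrix (Fin 2) (Fin 2) F) 0 1 * (h : Matrix (Fin 2) (Fin 2) F) 1 0 = 1 := by
      have := h.property
      rwa [Matrix.det_fin_two] at this
    have hu0 : u 0 = a ^ 2 * (h : Matrix (Fin 2) (Fin 2) F) 0 0 := by
      rw [← ha2]; simp
    have hu1 : u 1 = a ^ 2 * (h : Matrix (Fin 2) (Fin 2) F) 0 1 := by
      rw [← ha2]; simp
    have hv0 : v 0 = b ^ 2 * (h : Matrix (Fin 2) (Fin 2) F) 1 0 := by
      rw [← hb2]; simp
    have hv1 : v 1 = b ^ 2 * (h : Matrix (Fin 2) (Fin 2) F) 1 1 := by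
      rw [← hb2]; simp
    refine ⟨a * b, mul_ne_zero ha hb, ?_⟩
    rw [hu0, hu1, hv0, hv1]
    linear_combination (-(a ^ 2) * b ^ 2) * hdet
  · rintro ⟨e, he, he2⟩
    set M : Matrix (Fin 2) (Fin 2) F := Matrix.of ![(e⁻¹) ^ 2 • u, v] with hM
    have hM0 : M 0 = (e⁻¹) ^ 2 • u := rfl
    have hM1 : M 1 = v := rfl
    have hdet : M.det = 1 := by
      rw [Matrix.det_fin_two]
      show ((e⁻¹) ^ 2 • u) 0 * v 1 - ((e⁻¹) ^ 2 • u) 1 * v 0 = 1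
      simp only [Pi.smul_apply, smul_eq_mul]
      field_simp
      linear_combination -he2
    refine ⟨⟨M, hdet⟩, ?_, ?_⟩
    · refine (act_O (⟨M, hdet⟩ : Matrix.SpecialLinearGroup (Fin 2) F) _).trans ?_
      show Oo (Matrix.vecMul ![1, 0] M) = Oo u
      rw [vecMul_e0, hM0]
      exact O_smul (inv_ne_zero he)
    · refine (act_O (⟨M, hdet⟩ : Matrix.SpecialLinearGroup (Fin 2) F) _).trans ?_
      show Oo (Matrix.vecMul ![0, 1] M) = Oo v
      rw [vecMul_e1, hM1]

lemma neg_image_O (v : Fin 2 → F) :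
    (fun w : Fin 2 → F => -w) '' Oo v = Oo (-v) := by
  ext w
  simp only [Set.mem_image]
  constructor
  · rintro ⟨_, ⟨x, hx, rfl⟩, rfl⟩
    exact ⟨x, hx, by rw [smul_neg]⟩
  · rintro ⟨x, hx, rfl⟩
    exact ⟨x ^ 2 • v, ⟨x, hx, rfl⟩, by rw [smul_neg]⟩

lemma collinear {u v : Fin 2 → F} (hu : u ≠ 0)
    (hd : u 0 * v 1 - u 1 * v 0 = 0) : ∃ t : F, v = t • u := by
  have h01 : u 0 ≠ 0 ∨ u 1 ≠ 0 := by
    by_contra h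
    push_neg at h
    refine hu (funext fun j => ?_)
    fin_cases j
    · exact h.1
    · exact h.2
  rcases h01 with h0 | h1
  · refine ⟨v 0 / u 0, funext fun j => ?_⟩
    fin_cases j
    · show v 0 = v 0 / u 0 * u 0
      rw [div_mul_cancel₀ _ h0]
    · show v 1 = v 0 / u 0 * u 1
      rw [div_mul_eq_mul_div, eq_div_iff h0]
      linear_combination hd
  · refine ⟨v 1 / u 1, funext fun j => ?_⟩
    fin_cases j
    · show v 0 = v 1 / u 1 * u 0
      rw [div_mul_eq_mul_div, eq_div_iff h1]
      linear_combination -hd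
    · show v 1 = v 1 / u 1 * u 1
      rw [div_mul_cancel₀ _ h1]

end XqAux

open XqAux in
/-- For `q ≡ 3 (mod 4)`, `q ≥ 7`, in the orbital digraph `X_q` of `SL(2,q)` on `Δ`
defined by the arc `([1,0],[0,1])`, every vertex `v` has exactly one non-adjacent
vertex, namely `v^z` where `z = -I`. -/
theorem Xq_unique_nonneighbour (F : Type*) [Field F] [Fintype F] [DecidableEq F]
    (hq : Fintype.card F % 4 = 3) (hq7 : 7 ≤ Fintype.card F) :
    let O : (Fin 2 → F) → Set (Fin 2 → F) := fun v => {w | ∃ x : F, x ≠ 0 ∧ x ^ 2 • v = w}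
    let Δ : Set (Set (Fin 2 → F)) := {S | ∃ v : Fin 2 → F, v ≠ 0 ∧ S = O v}
    let act : Matrix.SpecialLinearGroup (Fin 2) F → Set (Fin 2 → F) → Set (Fin 2 → F) :=
      fun g S => (fun v => Matrix.vecMul v (g : Matrix (Fin 2) (Fin 2) F)) '' S
    let Arc : Set (Fin 2 → F) → Set (Fin 2 → F) → Prop :=
      fun S T => ∃ h : Matrix.SpecialLinearGroup (Fin 2) F,
        act h (O ![1, 0]) = S ∧ act h (O ![0, 1]) = T
    let zimg : Set (Fin 2 → F) → Set (Fin 2 → F) := fun S => (fun v : Fin 2 → F => -v) '' S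
    ∀ S ∈ Δ, zimg S ∈ Δ ∧ zimg S ≠ S ∧ ¬ (Arc S (zimg S) ∨ Arc (zimg S) S) ∧
      ∀ T ∈ Δ, T ≠ S → ¬ (Arc S T ∨ Arc T S) → T = zimg S := by
  intro O Δ act Arc zimg
  have hO : O = fun v => Oo v := rfl
  rintro S ⟨u, hu, rfl⟩
  rw [hO] at *
  have hzimg : zimg (Oo u) = Oo (-u) := neg_image_O u
  have hArcIff : ∀ a b : Fin 2 → F, Arc (Oo a) (Oo b) ↔
      ∃ e : F, e ≠ 0 ∧ e ^ 2 = a 0 * b 1 - a 1 * b 0 := fun a b => arc_iff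
  refine ⟨?_, ?_, ?_, ?_⟩
  · exact ⟨-u, neg_ne_zero.mpr hu, hzimg⟩
  · rw [hzimg]
    intro hcon
    obtain ⟨x, hx, hx2⟩ := exists_of_O_eq hcon
    -- x ^ 2 • (-u) = u
    have hiu : ∃ i, u i ≠ 0 := by
      by_contra h
      push_neg at h
      exact hu (funext h)
    obtain ⟨i, hi⟩ := hiu
    have := congrFun hx2 i
    simp only [Pi.smul_apply, Pi.neg_apply, smul_eq_mul] at this
    have hxm1 : x ^ 2 = -1 := by
      have h1 : (x ^ 2 + 1) * u i = 0 := by linear_combination -this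
      rcases mul_eq_zero.mp h1 with h2 | h2
      · linear_combination h2
      · exact absurd h2 hi
    exact neg_one_not_square hq ⟨x, by rw [← hxm1]; ring⟩
  · rw [hzimg]
    rintro (harc | harc)
    · obtain ⟨e, he, he2⟩ := (hArcIff u (-u)).mp harc
      simp only [Pi.neg_apply] at he2
      have : e ^ 2 = 0 := by linear_combination he2
      exact he (sq_eq_zero_iff.mp this)
    · obtain ⟨e, he, he2⟩ := (hArcIff (-u) u).mp harc
      simp only [Pi.neg_apply] at he2
      have : e ^ 2 = 0 := by linear_combination he2
      exact he (sq_eq_zero_iff.mp this)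
  · rintro T ⟨v, hv, rfl⟩ hTS hnadj
    rw [hzimg]
    set d : F := u 0 * v 1 - u 1 * v 0 with hd
    have hnot1 : ¬ ∃ e : F, e ≠ 0 ∧ e ^ 2 = d := by
      intro ⟨e, he, he2⟩
      exact hnadj (Or.inl ((hArcIff u v).mpr ⟨e, he, he2⟩))
    have hnot2 : ¬ ∃ e : F, e ≠ 0 ∧ e ^ 2 = -d := by
      intro ⟨e, he, he2⟩
      refine hnadj (Or.inr ((hArcIff v u).mpr ⟨e, he, ?_⟩))
      rw [he2, hd]; ring
    have hd0 : d = 0 := by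
      by_contra hd0
      rcases square_dichotomy hq hd0 with hs | hs
      · exact hnot1 (exists_sq_of_isSquare hd0 hs)
      · exact hnot2 (exists_sq_of_isSquare (neg_ne_zero.mpr hd0) hs)
    obtain ⟨t, ht⟩ := collinear hu hd0
    have ht0 : t ≠ 0 := by
      rintro rfl
      rw [zero_smul] at ht
      exact hv ht
    have htns : ¬ ∃ x : F, x ≠ 0 ∧ x ^ 2 = t := by
      rintro ⟨x, hx, rfl⟩
      exact hTS (O_eq_of_smul hx ht.symm).symm
    have htsq : IsSquare (-t) := by
      rcases square_dichotomy hq ht0 with hs | hs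
      · exact absurd (exists_sq_of_isSquare ht0 hs) htns
      · exact hs
    obtain ⟨r, hr, hr2⟩ := exists_sq_of_isSquare (neg_ne_zero.mpr ht0) htsq
    have hsm : r ^ 2 • (-u) = v := by
      rw [ht, hr2]
      ext i
      simp only [Pi.smul_apply, Pi.neg_apply, smul_eq_mul]
      ring
    exact (O_eq_of_smul hr hsm).symm
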